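/- For any ξ ∈ ℝⁿ \ {0} and any measurable kernel K : ℝⁿ → ℝ satisfying K(y) ≥ (2-σ)λ/|y|^{n+σ} for all y ≠ 0, with 0 < σ < 2 and λ > 0, the symbol s(ξ) = ∫_{ℝⁿ} 2(1 - cos(y·ξ)) K(y) dy satisfies s(ξ) ≥ c|ξ|^σ for a constant c > 0 depending only on n, λ (and uniform for σ in a compact subinterval of (0,2)). -/

import Mathlib

open MeasureTheory Real

/-- lower bound on the symbol: if `K(y) ≥ (2-σ)λ/|y|^{n+σ}` then
`s(ξ) = ∫ 2(1 - cos(y·ξ)) K(y) dy ≥ c |ξ|^σ` for `ξ ≠ 0`, with `c = c(n, λ) > 0`,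
uniformly for `σ` in a compact subinterval `[σ₀, σ₁] ⊂ (0, 2)`. -/
theorem symbol_lower_bound (n : ℕ) (hn : 0 < n) (lam : ℝ) (hlam : 0 < lam)
    (σ₀ σ₁ : ℝ) (h0 : 0 < σ₀) (h01 : σ₀ ≤ σ₁) (h1 : σ₁ < 2) :
    ∃ c : ℝ, 0 < c ∧ ∀ σ : ℝ, σ₀ ≤ σ → σ ≤ σ₁ →
      ∀ K : EuclideanSpace ℝ (Fin n) → ℝ, Measurable K →
      (∀ y : EuclideanSpace ℝ (Fin n), y ≠ 0 →
        0 ≤ K y ∧ (2 - σ) * lam / ‖y‖ ^ ((n : ℝ) + σ) ≤ K y) →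
      ∀ ξ : EuclideanSpace ℝ (Fin n), ξ ≠ 0 →
        ENNReal.ofReal (c * ‖ξ‖ ^ σ) ≤
          ∫⁻ y, ENNReal.ofReal (2 * (1 - Real.cos ((inner ℝ y ξ : ℝ))) * K y) := by
  haveI : Nonempty (Fin n) := Fin.pos_iff_nonempty.mp hn
  have hπ : (3 : ℝ) < π := Real.pi_gt_three
  -- volume of the unit ball
  set V : ENNReal := volume (Metric.ball (0 : EuclideanSpace ℝ (Fin n)) 1) with hV
  have hV0 : 0 < V := Metric.measure_ball_pos _ _ one_pos
  have hVt : V ≠ ⊤ := measure_ball_lt_top.ne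
  set B : ℝ := V.toReal with hB
  have hBpos : 0 < B := ENNReal.toReal_pos hV0.ne' hVt
  -- cos (3/8) < 1
  have hcos : Real.cos (3/8) < 1 := by
    have := Real.cos_lt_cos_of_nonneg_of_le_pi (le_refl (0:ℝ)) (by linarith : (3:ℝ)/8 ≤ π)
      (by norm_num : (0:ℝ) < 3/8)
    simpa using this
  set A : ℝ := 2 * (1 - Real.cos (3/8)) * ((2 - σ₁) * lam) with hA
  have hApos : 0 < A := by
    have h2σ : 0 < 2 - σ₁ := by linarith
    have : 0 < 1 - Real.cos (3/8) := by linarith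
    positivity
  refine ⟨A / 8 ^ n * B, by positivity, ?_⟩
  intro σ hσ0 hσ1 K hK hKlb ξ hξ
  have hξ0 : (0:ℝ) < ‖ξ‖ := norm_pos_iff.mpr hξ
  set r : ℝ := ‖ξ‖⁻¹ with hrdef
  have hr : 0 < r := inv_pos.mpr hξ0
  have hrξ : r * ‖ξ‖ = 1 := inv_mul_cancel₀ hξ0.ne'
  set y₀ : EuclideanSpace ℝ (Fin n) := (r / 2 * ‖ξ‖⁻¹) • ξ with hy₀
  have hny₀ : ‖y₀‖ = r / 2 := by
    rw [hy₀, norm_smul, Real.norm_eq_abs, abs_of_nonneg (by positivity)]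
    field_simp
  have hy₀ξ : (inner ℝ y₀ ξ : ℝ) = 1 / 2 := by
    rw [hy₀, real_inner_smul_left, real_inner_self_eq_norm_sq]
    rw [hrdef]
    field_simp
  have hσpos : 0 < σ := lt_of_lt_of_le h0 hσ0
  set p : ℝ := (n : ℝ) + σ with hp
  have hppos : 0 ≤ p := by
    have hn0 : (0:ℝ) ≤ (n:ℝ) := Nat.cast_nonneg n
    rw [hp]; linarith
  set a : ℝ := A / r ^ p with ha
  have hrp : 0 < r ^ p := Real.rpow_pos_of_pos hr p
  have hapos : 0 < a := by positivity
  -- pointwise bound on the ball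
  have key : ∀ y ∈ Metric.ball y₀ (r / 8),
      a ≤ 2 * (1 - Real.cos ((inner ℝ y ξ : ℝ))) * K y := by
    intro y hy
    rw [Metric.mem_ball, dist_eq_norm] at hy
    have hylb : 3 * r / 8 ≤ ‖y‖ := by
      have := norm_sub_norm_le y₀ y
      rw [norm_sub_rev y₀ y] at this
      rw [hny₀] at this
      linarith
    have hyub : ‖y‖ ≤ r := by
      have := norm_le_norm_add_norm_sub' y y₀  -- ‖y‖ ≤ ‖y₀‖ + ‖y - y₀‖ ?
      calc ‖y‖ = ‖y₀ + (y - y₀)‖ := by congr 1; abel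
        _ ≤ ‖y₀‖ + ‖y - y₀‖ := norm_add_le _ _
        _ ≤ r / 2 + r / 8 := by rw [hny₀]; linarith
        _ ≤ r := by linarith
    have hyne : y ≠ 0 := by
      intro h
      rw [h, norm_zero] at hylb
      linarith
    -- bound the inner product
    have hdiff : |(inner ℝ (y - y₀) ξ : ℝ)| ≤ 1 / 8 := by
      calc |(inner ℝ (y - y₀) ξ : ℝ)| ≤ ‖y - y₀‖ * ‖ξ‖ := abs_real_inner_le_norm _ _
        _ ≤ r / 8 * ‖ξ‖ := by
            apply mul_le_mul_of_nonneg_right hy.le (norm_nonneg _)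
        _ = 1 / 8 := by rw [div_mul_eq_mul_div, hrξ]
    have hsplit : (inner ℝ y ξ : ℝ) = 1 / 2 + (inner ℝ (y - y₀) ξ : ℝ) := by
      rw [← hy₀ξ, ← inner_add_left]
      norm_num
    have habs := abs_le.mp hdiff
    have ht1 : (3:ℝ)/8 ≤ (inner ℝ y ξ : ℝ) := by rw [hsplit]; linarith
    have ht2 : (inner ℝ y ξ : ℝ) ≤ 5/8 := by rw [hsplit]; linarith
    have hcosle : Real.cos ((inner ℝ y ξ : ℝ)) ≤ Real.cos (3/8) :=
      Real.cos_le_cos_of_nonneg_of_le_pi (by norm_num) (by linarith) ht1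
    -- bound K
    have hKy := hKlb y hyne
    have hKlow : (2 - σ₁) * lam / r ^ p ≤ K y := by
      refine le_trans ?_ hKy.2
      have hyp : 0 < ‖y‖ ^ p := Real.rpow_pos_of_pos (by linarith) p
      have hnum : (2 - σ₁) * lam ≤ (2 - σ) * lam :=
        mul_le_mul_of_nonneg_right (by linarith) hlam.le
      have hden : ‖y‖ ^ p ≤ r ^ p :=
        Real.rpow_le_rpow (norm_nonneg y) hyub hppos
      exact div_le_div₀ (mul_nonneg (by linarith) hlam.le) hnum hyp hden
    have hfac : 0 < 2 * (1 - Real.cos (3/8)) := by linarith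
    calc a = 2 * (1 - Real.cos (3/8)) * ((2 - σ₁) * lam / r ^ p) := by
            rw [ha, hA]; field_simp
      _ ≤ 2 * (1 - Real.cos ((inner ℝ y ξ : ℝ))) * K y := by
          have hb : 0 ≤ 2 * (1 - Real.cos ((inner ℝ y ξ : ℝ))) := by
            have := Real.cos_le_one ((inner ℝ y ξ : ℝ)); linarith
          have hc : 0 ≤ (2 - σ₁) * lam / r ^ p :=
            div_nonneg (mul_nonneg (by linarith) hlam.le) hrp.le
          exact mul_le_mul (by linarith) hKlow hc hb
  -- the integral estimate
  have hball : volume (Metric.ball y₀ (r / 8)) = ENNReal.ofReal ((r / 8) ^ n) * V := by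
    rw [MeasureTheory.Measure.addHaar_ball _ _ (by positivity : (0:ℝ) ≤ r / 8)]
    rw [finrank_euclideanSpace_fin]
  have step1 : ENNReal.ofReal a * volume (Metric.ball y₀ (r / 8)) ≤
      ∫⁻ y, ENNReal.ofReal (2 * (1 - Real.cos ((inner ℝ y ξ : ℝ))) * K y) := by
    rw [← lintegral_indicator_const measurableSet_ball]
    apply lintegral_mono
    intro y
    rcases em (y ∈ Metric.ball y₀ (r / 8)) with h | h
    · rw [Set.indicator_of_mem h]
      exact ENNReal.ofReal_le_ofReal (key y h)
    · rw [Set.indicator_of_notMem h]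
      exact zero_le
  refine le_trans ?_ step1
  rw [hball, ← mul_assoc, ← ENNReal.ofReal_toReal hVt, ← hB,
    ← ENNReal.ofReal_mul hapos.le, ← ENNReal.ofReal_mul (by positivity)]
  apply ENNReal.ofReal_le_ofReal
  -- real arithmetic: A / 8^n * B * ‖ξ‖^σ = a * (r/8)^n * B
  have hrn : r ^ n = r ^ ((n : ℝ)) := (Real.rpow_natCast r n).symm
  have hrpow : r ^ p = r ^ ((n : ℝ)) * r ^ σ := by
    rw [hp, Real.rpow_add hr]
  have hrσ : r ^ σ = (‖ξ‖ ^ σ)⁻¹ := by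
    rw [hrdef, Real.inv_rpow (norm_nonneg ξ)]
  have hξσ : 0 < ‖ξ‖ ^ σ := Real.rpow_pos_of_pos hξ0 σ
  have hrnpos : 0 < r ^ ((n:ℝ)) := Real.rpow_pos_of_pos hr _
  have : a * (r / 8) ^ n = A / 8 ^ n * ‖ξ‖ ^ σ := by
    rw [ha, div_pow, hrn, hrpow, hrσ]
    field_simp
  apply le_of_eq
  rw [this]
  ring
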